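/- Let R be a ring and let T be a right R-module that is cosilting with respect to some injective copresentation ζ : Q₀ → Q₁. Then Cogen(T) = Copres(T): a right R-module embeds into a direct product of copies of T if and only if it is the kernel of a homomorphism between direct products of copies of T. -/

import Mathlib

universe u v

open Function

variable (R : Type u) [Ring R]

/-- `X ∈ 𝓑_ζ`: every map `X → Q₁` factors through `ζ`. -/
def MemB {Q₀ Q₁ : Type v} [AddCommGroup Q₀] [Module R Q₀] [AddCommGroup Q₁] [Module R Q₁]
    (ζ : Q₀ →ₗ[R] Q₁) (X : Type v) [AddCommGroup X] [Module R X] : Prop :=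
  Surjective fun g : X →ₗ[R] Q₀ => ζ ∘ₗ g

/-- `X ∈ Cogen T`: `X` embeds into a direct product of copies of `T`. -/
def MemCogen (T : Type v) [AddCommGroup T] [Module R T]
    (X : Type v) [AddCommGroup X] [Module R X] : Prop :=
  ∃ (ι : Type v) (f : X →ₗ[R] (ι → T)), Injective f

/-- `Ext¹_R(X,T) = 0`, expressed as: every short exact sequence `0 → T → Y → X → 0` splits. -/
def Ext1Vanishes (X T : Type v) [AddCommGroup X] [Module R X] [AddCommGroup T] [Module R T] :
    Prop :=
  ∀ (Y : Type v) [AddCommGroup Y] [Module R Y] (i : T →ₗ[R] Y) (p : Y →ₗ[R] X),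
    Injective i → Surjective p → LinearMap.range i = LinearMap.ker p →
    ∃ s : X →ₗ[R] Y, p ∘ₗ s = LinearMap.id

/-- If `T` is cosilting with respect to the injective copresentation `ζ`,
then `Cogen T = Copres T`. -/
theorem stmt_7 {Q₀ Q₁ : Type v} [AddCommGroup Q₀] [Module R Q₀] [AddCommGroup Q₁] [Module R Q₁]
    (ζ : Q₀ →ₗ[R] Q₁) [Module.Injective R Q₀] [Module.Injective R Q₁]
    (T : Type v) [AddCommGroup T] [Module R T]
    (f : T →ₗ[R] Q₀) (hf : Injective f) (hex : LinearMap.range f = LinearMap.ker ζ)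
    (hcosilt : ∀ (X : Type v) [AddCommGroup X] [Module R X], MemCogen R T X ↔ MemB R ζ X) :
    ∀ (X : Type v) [AddCommGroup X] [Module R X],
      MemCogen R T X ↔
        ∃ (ι κ : Type v) (g : (ι → T) →ₗ[R] (κ → T)) (e : X →ₗ[R] (ι → T)),
          Injective e ∧ LinearMap.range e = LinearMap.ker g := by
  intro X _ _
  constructor
  · rintro ⟨ι₀, f₀, hf₀⟩
    -- evaluation embedding into T^(Hom(X,T))
    set I := X →ₗ[R] T with hI
    set e : X →ₗ[R] (I → T) := LinearMap.pi (fun h : I => h) with he_def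
    have he : Injective e := by
      intro x y hxy
      apply hf₀
      funext i
      have := congrFun hxy ((LinearMap.proj i).comp f₀)
      exact this
    set N := (I → T) ⧸ LinearMap.range e with hN
    set π : (I → T) →ₗ[R] N := Submodule.mkQ (LinearMap.range e) with hπ
    have hπsurj : Surjective π := Submodule.mkQ_surjective _
    have hπe : ∀ x : X, π (e x) = 0 := by
      intro x
      rw [hπ, Submodule.mkQ_apply, Submodule.Quotient.mk_eq_zero]
      exact ⟨x, rfl⟩
    -- N ∈ 𝓑_ζ
    have hNB : MemB R ζ N := by
      intro φ
      -- T^I ∈ 𝓑_ζ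
      have hTI : MemB R ζ (I → T) :=
        (hcosilt (I → T)).mp ⟨I, LinearMap.id, injective_id⟩
      obtain ⟨ψ, hψ⟩ := hTI (φ ∘ₗ π)
      simp only at hψ
      have hmem : ∀ x : X, ψ (e x) ∈ LinearMap.range f := by
        intro x
        rw [hex, LinearMap.mem_ker]
        have := congrFun (congrArg (DFunLike.coe) hψ) (e x)
        simp only [LinearMap.comp_apply] at this
        rw [this, hπe x, map_zero]
      -- δ : X → T with f ∘ δ = ψ ∘ e
      set δ : X →ₗ[R] T :=
        ((LinearEquiv.ofInjective f hf).symm : LinearMap.range f →ₗ[R] T) ∘ₗ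
          LinearMap.codRestrict (LinearMap.range f) (ψ ∘ₗ e) hmem with hδ_def
      have hfδ : ∀ x : X, f (δ x) = ψ (e x) := by
        intro x
        have : f (((LinearEquiv.ofInjective f hf).symm)
            (LinearMap.codRestrict (LinearMap.range f) (ψ ∘ₗ e) hmem x)) =
            ((LinearEquiv.ofInjective f hf)
              (((LinearEquiv.ofInjective f hf).symm)
                (LinearMap.codRestrict (LinearMap.range f) (ψ ∘ₗ e) hmem x)) : Q₀) := by
          rw [LinearEquiv.ofInjective_apply]
        rw [hδ_def]
        simp only [LinearMap.comp_apply, LinearEquiv.coe_coe]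
        rw [this, LinearEquiv.apply_symm_apply]
        rfl
      set ψ' : (I → T) →ₗ[R] Q₀ := f ∘ₗ LinearMap.proj δ with hψ'_def
      have hψ'e : ∀ x : X, ψ' (e x) = ψ (e x) := by
        intro x
        have : e x δ = δ x := rfl
        simp [ψ', this, hfδ x]
      have hsub : LinearMap.range e ≤ LinearMap.ker (ψ - ψ') := by
        rintro _ ⟨x, rfl⟩
        simp [LinearMap.mem_ker, hψ'e x]
      set θ : N →ₗ[R] Q₀ := Submodule.liftQ (LinearMap.range e) (ψ - ψ') hsub with hθ_def
      refine ⟨θ, ?_⟩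
      simp only
      apply LinearMap.ext
      intro n
      obtain ⟨z, rfl⟩ := hπsurj n
      have hθπ : θ (π z) = ψ z - ψ' z := by
        rw [hθ_def, hπ, Submodule.mkQ_apply, Submodule.liftQ_apply, LinearMap.sub_apply]
      have hζψ : ζ (ψ z) = φ (π z) := by
        have := congrFun (congrArg (DFunLike.coe) hψ) z
        simpa using this
      have hζψ' : ζ (ψ' z) = 0 := by
        have : ψ' z ∈ LinearMap.range f := ⟨z δ, rfl⟩
        rw [hex, LinearMap.mem_ker] at this
        exact this
      simp only [LinearMap.comp_apply, hθπ, map_sub, hζψ, hζψ', sub_zero]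
    -- hence N ∈ Cogen T
    obtain ⟨κ, v, hv⟩ := (hcosilt N).mpr hNB
    refine ⟨I, κ, v ∘ₗ π, e, he, ?_⟩
    rw [LinearMap.ker_comp, LinearMap.ker_eq_bot.mpr hv, Submodule.comap_bot]
    exact (Submodule.ker_mkQ _).symm
  · rintro ⟨ι, κ, g, e, he, -⟩
    exact ⟨ι, e, he⟩
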